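/- arXiv:2303.15535 — 3 statements merged into one kernel-verified Lean document; each statement's English description precedes it below -/
import Mathlib

section
/- If a continuous semiflow on a smooth Riemannian manifold M admits a proper continuous function V : M → ℝ and a subset S ⊆ M such that V(S) is nowhere dense in ℝ and V is strictly decreasing along trajectories outside S, then the chain recurrent set of the semiflow is contained in S. -/
/-- An autonomous continuous semiflow on a metric space. -/
structure Semiflow (M : Type*) [MetricSpace M] where
  toFun : ℝ → M → M
  cont : Continuous fun p : ℝ × M => toFun p.1 p.2
  map_zero : ∀ x, toFun 0 x = x
  map_add : ∀ {s t : ℝ}, 0 ≤ s → 0 ≤ t → ∀ x, toFun t (toFun s x) = toFun (t + s) x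

/-- A closed `(ε, T)`-chain at `x`. -/
def Semiflow.IsChain {M : Type*} [MetricSpace M] (Φ : Semiflow M) (ε T : ℝ) (x : M) : Prop :=
  ∃ (n : ℕ) (xs : Fin (n + 1) → M) (ts : Fin n → ℝ),
    0 < n ∧ xs 0 = x ∧ xs (Fin.last n) = x ∧
    ∀ i : Fin n, T < ts i ∧ dist (Φ.toFun (ts i) (xs i.castSucc)) (xs i.succ) < ε

/-- The chain recurrent set of a semiflow. -/
def Semiflow.chainRecurrentSet {M : Type*} [MetricSpace M] (Φ : Semiflow M) : Set M :=
  {x | ∀ ε T : ℝ, 0 < ε → 0 < T → Φ.IsChain ε T x}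

/-- The equilibrium set of a semiflow. -/
def Semiflow.equilibria {M : Type*} [MetricSpace M] (Φ : Semiflow M) : Set M :=
  {x | ∀ t : ℝ, 0 ≤ t → Φ.toFun t x = x}

lemma Semiflow.cont_time' {M : Type*} [MetricSpace M] (Φ : Semiflow M) (y : M) :
    Continuous fun s : ℝ => Φ.toFun s y :=
  Φ.cont.comp (continuous_id.prodMk continuous_const)

lemma Semiflow.cont_space' {M : Type*} [MetricSpace M] (Φ : Semiflow M) (t : ℝ) :
    Continuous fun y : M => Φ.toFun t y :=
  Φ.cont.comp (continuous_const.prodMk continuous_id)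

lemma Semiflow.sublevel_invariant' {M : Type*} [MetricSpace M] (Φ : Semiflow M)
    (V : M → ℝ) (S : Set M) (hVcont : Continuous V)
    (hdec : ∀ x ∉ S, ∀ t : ℝ, 0 < t → V (Φ.toFun t x) < V x)
    (c : ℝ) (hc : ∀ y ∈ S, V y ≠ c) :
    ∀ y, V y ≤ c → ∀ t, 0 ≤ t → V (Φ.toFun t y) ≤ c := by
  intro y hy t ht
  by_contra hcon
  push_neg at hcon
  set f : ℝ → ℝ := fun s => V (Φ.toFun s y) with hf
  have hfc : Continuous f := hVcont.comp (Φ.cont_time' y)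
  have hf0 : f 0 ≤ c := by simpa [hf, Φ.map_zero] using hy
  have htpos : 0 < t := by
    rcases ht.lt_or_eq with h | h
    · exact h
    · subst h; exact absurd hcon (not_lt.2 hf0)
  set A : Set ℝ := Set.Icc 0 t ∩ f ⁻¹' Set.Iic c with hA
  have hAne : A.Nonempty := ⟨0, ⟨le_refl 0, ht⟩, hf0⟩
  have hAbdd : BddAbove A := ⟨t, fun r hr => hr.1.2⟩
  have hAclosed : IsClosed A := isClosed_Icc.inter (isClosed_Iic.preimage hfc)
  set s := sSup A with hs
  have hsA : s ∈ A := hAclosed.csSup_mem hAne hAbdd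
  have hs0 : 0 ≤ s := hsA.1.1
  have hst : s < t := by
    rcases hsA.1.2.lt_or_eq with h | h
    · exact h
    · exfalso; rw [h] at hsA; exact absurd hcon (not_lt.2 hsA.2)
  have hafter : ∀ r, s < r → r ≤ t → c < f r := by
    intro r hr1 hr2
    by_contra h
    push_neg at h
    have : r ∈ A := ⟨⟨hs0.trans hr1.le, hr2⟩, h⟩
    exact absurd (le_csSup hAbdd this) (not_le.2 hr1)
  have hsc : c ≤ f s := by
    have h1 : Filter.Tendsto f (nhdsWithin s (Set.Ioi s)) (nhds (f s)) :=
      (hfc.continuousAt).continuousWithinAt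
    have h2 : ∀ᶠ r in nhdsWithin s (Set.Ioi s), c ≤ f r := by
      filter_upwards [self_mem_nhdsWithin, nhdsWithin_le_nhds (Iio_mem_nhds hst)] with r hr1 hr2
      exact (hafter r hr1 hr2.le).le
    exact ge_of_tendsto h1 h2
  have hfs : f s = c := le_antisymm hsA.2 hsc
  have hfs' : V (Φ.toFun s y) = c := hfs
  have hns : Φ.toFun s y ∉ S := fun h => hc _ h hfs'
  have := hdec _ hns (t - s) (by linarith)
  rw [Φ.map_add hs0 (by linarith), sub_add_cancel, hfs'] at this
  exact absurd (hcon.trans this) (lt_irrefl c)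

/-- If a continuous semiflow on `M` admits a proper continuous function
`V : M → ℝ` and a subset `S ⊆ M` such that `V '' S` is nowhere dense in `ℝ` and `V` is
strictly decreasing along trajectories outside `S`, then the chain recurrent set is
contained in `S`. -/
theorem chainRecurrentSet_subset_of_decreasing_outside
    {M : Type*} [MetricSpace M] (Φ : Semiflow M) (V : M → ℝ) (S : Set M)
    (hVcont : Continuous V)
    (hVproper : ∀ c : ℝ, IsCompact {x : M | V x ≤ c})
    (hnd : IsNowhereDense (V '' S))
    (hdec : ∀ x ∉ S, ∀ t : ℝ, 0 < t → V (Φ.toFun t x) < V x) :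
    Φ.chainRecurrentSet ⊆ S := by
  intro x hx
  by_contra hxS
  set v := V x with hv
  set u := V (Φ.toFun 1 x) with hu
  have huv : u < v := hdec x hxS 1 one_pos
  -- find an interval inside (u, v) avoiding the closure of V '' S
  set C := closure (V '' S) with hC
  have hOopen : IsOpen (Set.Ioo u v ∩ Cᶜ) :=
    isOpen_Ioo.inter isClosed_closure.isOpen_compl
  obtain ⟨p, hpIoo, hpC⟩ : ∃ p, p ∈ Set.Ioo u v ∧ p ∉ C := by
    by_contra h
    push_neg at h
    have hsub : Set.Ioo u v ⊆ interior C :=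
      (isOpen_Ioo.subset_interior_iff).2 (fun q hq => h q hq)
    have : (u + v) / 2 ∈ interior C := hsub ⟨by linarith, by linarith⟩
    rw [hnd] at this
    exact this
  obtain ⟨r, hrpos, hball⟩ : ∃ r > 0, Metric.ball p r ⊆ Set.Ioo u v ∩ Cᶜ :=
    Metric.isOpen_iff.1 hOopen p ⟨hpIoo, hpC⟩
  rw [Real.ball_eq_Ioo] at hball
  set b₁ := p - r / 2 with hb₁
  set b₂ := p + r / 2 with hb₂
  have hb₁b₂ : b₁ < b₂ := by rw [hb₁, hb₂]; linarith
  have hIccball : Set.Icc b₁ b₂ ⊆ Set.Ioo (p - r) (p + r) := by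
    intro q hq
    constructor
    · have := hq.1; rw [hb₁] at this; linarith
    · have := hq.2; rw [hb₂] at this; linarith
  have hIccC : ∀ q ∈ Set.Icc b₁ b₂, q ∈ Set.Ioo u v ∧ q ∉ C := by
    intro q hq
    have := hball (hIccball hq)
    exact ⟨this.1, this.2⟩
  have hur : u ≤ p - r := by
    by_contra h
    push_neg at h
    have : u ∈ Set.Ioo u v ∩ Cᶜ := hball ⟨h, by linarith [hpIoo.1]⟩
    exact absurd this.1.1 (lt_irrefl u)
  have hrv : p + r ≤ v := by
    by_contra h
    push_neg at h
    have : v ∈ Set.Ioo u v ∩ Cᶜ := hball ⟨by linarith [hpIoo.2], h⟩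
    exact absurd this.1.2 (lt_irrefl v)
  have hub₁ : u < b₁ := by rw [hb₁]; linarith
  have hb₂v : b₂ < v := by rw [hb₂]; linarith
  -- points of S have V-value outside [b₁, b₂]
  have hSlevel : ∀ y ∈ S, V y ∉ Set.Icc b₁ b₂ := by
    intro y hyS hyV
    exact (hIccC _ hyV).2 (subset_closure ⟨y, hyS, rfl⟩)
  have hc₁ : ∀ y ∈ S, V y ≠ b₁ := fun y hy h =>
    hSlevel y hy (by rw [h]; exact ⟨le_refl _, hb₁b₂.le⟩)
  have hc₂ : ∀ y ∈ S, V y ≠ b₂ := fun y hy h =>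
    hSlevel y hy (by rw [h]; exact ⟨hb₁b₂.le, le_refl _⟩)
  have inv₁ := Φ.sublevel_invariant' V S hVcont hdec b₁ hc₁
  have inv₂ := Φ.sublevel_invariant' V S hVcont hdec b₂ hc₂
  -- uniform decrease on the compact band K = {b₁ ≤ V ≤ b₂}
  set K := V ⁻¹' Set.Icc b₁ b₂ with hKdef
  have hKcpt : IsCompact K :=
    (hVproper b₂).of_isClosed_subset (isClosed_Icc.preimage hVcont)
      (fun y hy => hy.2)
  obtain ⟨δ, hδpos, hδ⟩ : ∃ δ > 0, ∀ y ∈ K, V (Φ.toFun 1 y) ≤ V y - δ := by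
    rcases K.eq_empty_or_nonempty with h | h
    · exact ⟨1, one_pos, by simp [h]⟩
    · have hg : ContinuousOn (fun y => V (Φ.toFun 1 y) - V y) K :=
        ((hVcont.comp (Φ.cont_space' 1)).sub hVcont).continuousOn
      obtain ⟨y₀, hy₀K, hmax⟩ := hKcpt.exists_isMaxOn h hg
      have hy₀S : y₀ ∉ S := fun h' => hSlevel y₀ h' hy₀K
      have hneg : V (Φ.toFun 1 y₀) - V y₀ < 0 := by
        have := hdec y₀ hy₀S 1 one_pos; linarith
      refine ⟨-(V (Φ.toFun 1 y₀) - V y₀), by linarith, fun y hy => ?_⟩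
      have := (isMaxOn_iff.mp hmax) y hy
      linarith
  -- after N unit steps the value drops below b₁
  obtain ⟨N, hN⟩ := exists_nat_gt ((b₂ - b₁) / δ)
  have hNδ : b₂ - N * δ < b₁ := by
    have : (b₂ - b₁) / δ * δ < N * δ := by
      apply mul_lt_mul_of_pos_right hN hδpos
    rw [div_mul_cancel₀ _ (ne_of_gt hδpos)] at this
    linarith
  have stepcast : ∀ (m : ℕ) (y : M),
      Φ.toFun 1 (Φ.toFun (m : ℝ) y) = Φ.toFun ((m + 1 : ℕ) : ℝ) y := by
    intro m y
    rw [Φ.map_add (by positivity) zero_le_one]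
    congr 1
    push_cast
    ring
  have Bnat : ∀ y, V y ≤ b₂ → ∀ m : ℕ,
      V (Φ.toFun (m : ℝ) y) ≤ b₁ ∨ V (Φ.toFun (m : ℝ) y) ≤ b₂ - m * δ := by
    intro y hy m
    induction m with
    | zero => right; simpa [Φ.map_zero] using hy
    | succ m ih =>
      have hstep : ∀ (h : V (Φ.toFun (m : ℝ) y) ≤ b₁),
          V (Φ.toFun ((m + 1 : ℕ) : ℝ) y) ≤ b₁ := by
        intro h
        rw [← stepcast m y]
        exact inv₁ _ h 1 zero_le_one
      rcases ih with h | h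
      · exact Or.inl (hstep h)
      · by_cases h' : V (Φ.toFun (m : ℝ) y) ≤ b₁
        · exact Or.inl (hstep h')
        · push_neg at h'
          have hK : Φ.toFun (m : ℝ) y ∈ K :=
            ⟨h'.le, inv₂ y hy (m : ℝ) (by positivity)⟩
          have := hδ _ hK
          rw [stepcast m y] at this
          right
          push_cast at this ⊢
          linarith
  have BN : ∀ y, V y ≤ b₂ → V (Φ.toFun (N : ℝ) y) ≤ b₁ := by
    intro y hy
    rcases Bnat y hy N with h | h
    · exact h
    · linarith
  -- reaching {V ≤ b₁} after any time ≥ N from {V ≤ b₂}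
  have D1 : ∀ y, V y ≤ b₂ → ∀ t : ℝ, (N : ℝ) ≤ t → V (Φ.toFun t y) ≤ b₁ := by
    intro y hy t ht
    have h1 : Φ.toFun (t - N) (Φ.toFun (N : ℝ) y) = Φ.toFun t y := by
      rw [Φ.map_add (by positivity) (by linarith)]
      ring_nf
    rw [← h1]
    exact inv₁ _ (BN y hy) (t - N) (by linarith)
  set T : ℝ := (N : ℝ) + 1 with hT
  have hTpos : 0 < T := by positivity
  have D : ∀ y, (V y ≤ b₂ ∨ y = x) → ∀ t : ℝ, T < t → V (Φ.toFun t y) ≤ b₁ := by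
    intro y hy t ht
    rcases hy with hy | rfl
    · exact D1 y hy t (by rw [hT] at ht; linarith)
    · have hN0 : (0:ℝ) ≤ (N:ℝ) := Nat.cast_nonneg N
      have ht1 : (N : ℝ) ≤ t - 1 := by rw [hT] at ht; linarith
      have h1 : Φ.toFun (t - 1) (Φ.toFun 1 y) = Φ.toFun t y := by
        rw [Φ.map_add zero_le_one (by linarith)]
        congr 1
        ring
      rw [← h1]
      exact D1 _ ((hub₁.trans hb₁b₂).le) (t - 1) ht1
  -- jump control
  obtain ⟨ε, hεpos, hε⟩ : ∃ ε > 0, ∀ z w : M, V z ≤ b₁ → dist z w < ε → V w ≤ b₂ := by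
    have hopen : IsOpen {y : M | V y < b₂} := isOpen_lt hVcont continuous_const
    have hsub : {y : M | V y ≤ b₁} ⊆ {y : M | V y < b₂} :=
      fun y hy => lt_of_le_of_lt hy hb₁b₂
    obtain ⟨δ', hδ'pos, hthick⟩ :=
      (hVproper b₁).exists_thickening_subset_open hopen hsub
    refine ⟨δ', hδ'pos, fun z w hz hd => ?_⟩
    exact le_of_lt (hthick (Metric.mem_thickening_iff.2 ⟨z, hz, by rwa [dist_comm]⟩))
  -- take a chain and get a contradiction
  obtain ⟨n, xs, ts, hn, hx0, hlast, hchain⟩ := hx ε T hεpos hTpos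
  have key : ∀ k : ℕ, ∀ hk : k < n, V (xs ⟨k + 1, Nat.succ_lt_succ hk⟩) ≤ b₂ := by
    intro k
    induction k with
    | zero =>
      intro hk
      have hi := hchain ⟨0, hk⟩
      have hcs : (⟨0, hk⟩ : Fin n).castSucc = (0 : Fin (n+1)) := rfl
      have hVflow : V (Φ.toFun (ts ⟨0, hk⟩) ((⟨0, hk⟩ : Fin n).castSucc |> xs)) ≤ b₁ := by
        rw [hcs, hx0]
        exact D x (Or.inr rfl) _ hi.1
      have := hε _ _ hVflow hi.2
      simpa using this
    | succ m ih =>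
      intro hk
      have hm : m < n := Nat.lt_of_succ_lt hk
      have hprev := ih hm
      have hi := hchain ⟨m + 1, hk⟩
      have hcs : (⟨m + 1, hk⟩ : Fin n).castSucc = (⟨m + 1, Nat.succ_lt_succ hm⟩ : Fin (n+1)) := rfl
      have hVflow : V (Φ.toFun (ts ⟨m + 1, hk⟩) (xs (⟨m + 1, hk⟩ : Fin n).castSucc)) ≤ b₁ := by
        rw [hcs]
        exact D _ (Or.inl hprev) _ hi.1
      have := hε _ _ hVflow hi.2
      simpa using this
  have hfin : V (xs (Fin.last n)) ≤ b₂ := by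
    have h1 := key (n - 1) (by omega)
    have h2 : (⟨n - 1 + 1, Nat.succ_lt_succ (by omega)⟩ : Fin (n+1)) = Fin.last n := by
      ext; simp; omega
    rwa [h2] at h1
  rw [hlast] at hfin
  exact absurd hfin (not_le.2 hb₂v)
end

section
/- If the equilibrium set E(Φ) of a continuous semiflow on a Riemannian manifold consists of isolated points, and there exists a proper continuous function V : M → ℝ that is strictly decreasing along all nonequilibrium trajectories, then the chain recurrent set equals the equilibrium set: R(Φ) = E(Φ). -/
/-- If the equilibrium set of a continuous semiflow consists of isolated
points, and there exists a proper continuous `V : M → ℝ` strictly decreasing along all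
nonequilibrium trajectories, then the chain recurrent set equals the equilibrium set. -/
theorem chainRecurrentSet_eq_equilibria
    {M : Type*} [MetricSpace M] (Φ : Semiflow M) (V : M → ℝ)
    (hVcont : Continuous V)
    (hVproper : ∀ c : ℝ, IsCompact {x : M | V x ≤ c})
    (hiso : ∀ x ∈ Φ.equilibria, ∃ U : Set M, IsOpen U ∧ U ∩ Φ.equilibria = {x})
    (hdec : ∀ x ∉ Φ.equilibria, ∀ t : ℝ, 0 < t → V (Φ.toFun t x) < V x) :
    Φ.chainRecurrentSet = Φ.equilibria := by
  have hcont : ∀ t : ℝ, Continuous fun x => Φ.toFun t x := fun t =>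
    Φ.cont.comp (Continuous.prodMk_right t)
  have hEclosed : IsClosed Φ.equilibria := by
    have hrw : Φ.equilibria = ⋂ (t : ℝ) (_ : 0 ≤ t), {x | Φ.toFun t x = x} := by
      ext x; simp [Semiflow.equilibria]
    rw [hrw]
    exact isClosed_iInter fun t => isClosed_iInter fun _ =>
      isClosed_eq (hcont t) continuous_id
  have mono1 : ∀ (y : M) (t : ℝ), 0 ≤ t → V (Φ.toFun t y) ≤ V y := by
    intro y t ht
    by_cases hy : y ∈ Φ.equilibria
    · rw [hy t ht]
    · rcases ht.eq_or_lt with h | h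
      · rw [← h, Φ.map_zero]
      · exact (hdec y hy t h).le
  have mono2 : ∀ (y : M) (s t : ℝ), 0 ≤ s → s ≤ t →
      V (Φ.toFun t y) ≤ V (Φ.toFun s y) := by
    intro y s t hs hst
    have h1 : Φ.toFun (t - s) (Φ.toFun s y) = Φ.toFun t y := by
      rw [Φ.map_add hs (sub_nonneg.2 hst) y, sub_add_cancel]
    rw [← h1]
    exact mono1 _ _ (sub_nonneg.2 hst)
  apply Set.Subset.antisymm
  · -- chain recurrent ⊆ equilibria
    intro p hp
    by_contra hpE
    set c := V p with hc
    have hb : V (Φ.toFun 1 p) < c := hdec p hpE 1 one_pos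
    set b := V (Φ.toFun 1 p) with hbdef
    -- the equilibria in the sublevel set {V ≤ c} form a finite set
    set E' := Φ.equilibria ∩ {x : M | V x ≤ c} with hE'
    have hE'comp : IsCompact E' := (hVproper c).inter_left hEclosed
    have hE'fin : E'.Finite := by
      choose U hUopen hUeq using hiso
      have hcover : E' ⊆ ⋃ i : E', U i.1 i.2.1 := by
        intro y hy
        refine Set.mem_iUnion.2 ⟨⟨y, hy⟩, ?_⟩
        have h1 : y ∈ U y hy.1 ∩ Φ.equilibria := by
          rw [hUeq y hy.1]; exact Set.mem_singleton y
        exact h1.1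
      obtain ⟨t, ht⟩ := hE'comp.elim_finite_subcover
        (fun i : E' => U i.1 i.2.1) (fun i => hUopen i.1 i.2.1) hcover
      apply Set.Finite.subset (t.finite_toSet.image Subtype.val)
      intro y hy
      obtain ⟨i, hit, hyU⟩ := Set.mem_iUnion₂.1 (ht hy)
      have h2 : y ∈ U i.1 i.2.1 ∩ Φ.equilibria := ⟨hyU, hy.1⟩
      rw [hUeq i.1 i.2.1] at h2
      exact ⟨i, hit, h2.symm⟩
    -- a level β < c above b and above every equilibrium value below c
    set A : Set ℝ := insert b ((V '' E') ∩ Set.Iio c) with hA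
    have hAfin : A.Finite := (Set.Finite.inter_of_left (hE'fin.image V) _).insert b
    have hAne : A.Nonempty := ⟨b, Set.mem_insert b _⟩
    set β := sSup A with hβ
    have hβmem : β ∈ A := hAne.csSup_mem hAfin
    have hβc : β < c := by
      rcases Set.mem_insert_iff.1 hβmem with h | h
      · rw [h]; exact hb
      · exact h.2
    have hbβ : b ≤ β := le_csSup hAfin.bddAbove (Set.mem_insert _ _)
    have hEβ : ∀ e ∈ Φ.equilibria, V e < c → V e ≤ β := by
      intro e he hec
      exact le_csSup hAfin.bddAbove
        (Set.mem_insert_iff.2 (Or.inr ⟨⟨e, ⟨he, hec.le⟩, rfl⟩, hec⟩))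
    set L1 := β + (c - β) / 3 with hL1def
    set L2 := β + 2 * (c - β) / 3 with hL2def
    have hβL1 : β < L1 := by rw [hL1def]; linarith
    have hL1L2 : L1 < L2 := by rw [hL1def, hL2def]; linarith
    have hL2c : L2 < c := by rw [hL2def]; linarith
    -- the band S contains no equilibria and is compact
    set S := {y : M | L1 ≤ V y ∧ V y ≤ L2} with hS
    have hScomp : IsCompact S := by
      have hrw : S = {y : M | V y ≤ L2} ∩ V ⁻¹' Set.Ici L1 := by
        ext y; simp [hS, and_comm]
      rw [hrw]
      exact (hVproper L2).inter_right (isClosed_Ici.preimage hVcont)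
    have hSE : ∀ y ∈ S, y ∉ Φ.equilibria := by
      intro y hy hyE
      have h1 := hEβ y hyE (lt_of_le_of_lt hy.2 hL2c)
      have := hy.1
      linarith
    -- uniform drop μ on S for the time-one map
    obtain ⟨μ, hμpos, hμ⟩ : ∃ μ > 0, ∀ y ∈ S, V (Φ.toFun 1 y) ≤ V y - μ := by
      rcases S.eq_empty_or_nonempty with h | h
      · exact ⟨1, one_pos, by simp [h]⟩
      · obtain ⟨y₀, hy₀S, hy₀⟩ := hScomp.exists_isMinOn h
          ((hVcont.sub (hVcont.comp (hcont 1))).continuousOn)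
        refine ⟨V y₀ - V (Φ.toFun 1 y₀),
          sub_pos.2 (hdec y₀ (hSE y₀ hy₀S) 1 one_pos), ?_⟩
        intro y hyS
        have h2 := isMinOn_iff.1 hy₀ y hyS
        replace h2 : V y₀ - V (Φ.toFun 1 y₀) ≤ V y - V (Φ.toFun 1 y) := h2
        linarith
    -- jump modulus θ and the corresponding ε
    set θ := min μ ((c - β) / 3) with hθdef
    have hθpos : 0 < θ := lt_min hμpos (by linarith)
    have hθμ : θ ≤ μ := min_le_left _ _
    have hθβ : θ ≤ (c - β) / 3 := min_le_right _ _
    clear_value θ L2 L1 β b c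
    obtain ⟨ε, hεpos, hjump⟩ :
        ∃ ε > 0, ∀ y z : M, V y ≤ c → dist y z < ε → V z ≤ V y + θ := by
      obtain ⟨δ₁, hδ₁pos, hδ₁⟩ := (hVproper c).exists_thickening_subset_open
        (isOpen_lt hVcont (continuous_const : Continuous fun _ : M => c + 1))
        (fun x hx => lt_of_le_of_lt hx (lt_add_one c))
      have hUC := (hVproper (c + 1)).uniformContinuousOn_of_continuous hVcont.continuousOn
      rw [Metric.uniformContinuousOn_iff] at hUC
      obtain ⟨δ₂, hδ₂pos, hδ₂⟩ := hUC θ hθpos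
      refine ⟨min δ₁ δ₂, lt_min hδ₁pos hδ₂pos, ?_⟩
      intro y z hy hdist
      have hzK : V z ≤ c + 1 := by
        have hz : z ∈ Metric.thickening δ₁ {x : M | V x ≤ c} :=
          Metric.mem_thickening_iff.2
            ⟨y, hy, by rw [dist_comm]; exact lt_of_lt_of_le hdist (min_le_left _ _)⟩
        exact (hδ₁ hz).le
      have hyK : V y ≤ c + 1 := by linarith
      have h3 := hδ₂ y hyK z hzK (lt_of_lt_of_le hdist (min_le_right _ _))
      rw [Real.dist_eq] at h3
      have h4 := (abs_lt.1 h3).1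
      linarith
    -- get a closed (ε, 1)-chain at p
    obtain ⟨n, xs, ts, hn, hx0, hxn, hstep⟩ := hp ε 1 hεpos one_pos
    -- one chain step preserves the bound V ≤ L2
    have key : ∀ i : Fin n, V (xs i.castSucc) ≤ L2 → V (xs i.succ) ≤ L2 := by
      intro i hVi
      obtain ⟨hti, hdi⟩ := hstep i
      set y := xs i.castSucc with hy
      by_cases hcase : V y ≤ L1
      · have h1 : V (Φ.toFun (ts i) y) ≤ V y := mono1 y (ts i) (by linarith)
        have h2 := hjump _ _ (show V (Φ.toFun (ts i) y) ≤ c by linarith) hdi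
        linarith
      · push_neg at hcase
        have hyS : y ∈ S := ⟨hcase.le, hVi⟩
        have h1 : V (Φ.toFun (ts i) y) ≤ V (Φ.toFun 1 y) :=
          mono2 y 1 (ts i) one_pos.le hti.le
        have h2 := hμ y hyS
        have h3 := hjump _ _ (show V (Φ.toFun (ts i) y) ≤ c by linarith) hdi
        linarith
    -- every chain point after the first has V ≤ L2
    have main : ∀ i : ℕ, ∀ h : i < n, V (xs ⟨i + 1, Nat.succ_lt_succ h⟩) ≤ L2 := by
      intro i
      induction i with
      | zero =>
        intro h
        obtain ⟨ht0, hd0⟩ := hstep ⟨0, h⟩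
        have hx0' : xs (Fin.castSucc (⟨0, h⟩ : Fin n)) = p := by
          have he : Fin.castSucc (⟨0, h⟩ : Fin n) = 0 := rfl
          rw [he, hx0]
        rw [hx0'] at hd0
        have h1 : V (Φ.toFun (ts ⟨0, h⟩) p) ≤ b := by
          rw [hbdef]; exact mono2 p 1 (ts ⟨0, h⟩) one_pos.le ht0.le
        have h2 := hjump _ _ (show V (Φ.toFun (ts ⟨0, h⟩) p) ≤ c by linarith) hd0
        have h3 : V (xs (Fin.succ (⟨0, h⟩ : Fin n))) ≤ L2 := by linarith
        exact h3
      | succ i ih =>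
        intro h
        have hprev : V (xs (Fin.castSucc (⟨i + 1, h⟩ : Fin n))) ≤ L2 :=
          ih (Nat.lt_of_succ_lt h)
        exact key ⟨i + 1, h⟩ hprev
    -- conclude: the endpoint p would have V p ≤ L2 < c = V p
    obtain ⟨m, hm⟩ : ∃ m, n = m + 1 := ⟨n - 1, (Nat.succ_pred_eq_of_pos hn).symm⟩
    subst hm
    have hfin := main m (Nat.lt_succ_self m)
    have hlast : xs ⟨m + 1, Nat.succ_lt_succ (Nat.lt_succ_self m)⟩ = p := hxn
    rw [hlast] at hfin
    rw [← hc] at hfin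
    linarith
  · -- equilibria ⊆ chain recurrent
    intro x hx ε T hε hT
    exact ⟨1, fun _ => x, fun _ => T + 1, one_pos, rfl, rfl, fun i =>
      ⟨lt_add_one T, by rw [hx (T + 1) (by linarith)]; simpa using hε⟩⟩
end

section
/- Consider the cascade x' = f(x,y), y' = g(y) with interconnection term h(x,y) = f(x,y) − f(x,0_Y). Suppose W : X → ℝ≥0 is a proper differentiable Lyapunov function for x' = f(x,0_Y) (i.e., L_{f(x,0_Y)} W ≤ 0), and along a fixed trajectory (x(t), y(t)) there exist constants A, B, ω > 0 and c ∈ ℝ such that L_{h(x,y(t))} W(x) ≤ A e^{-ωt} W(x) + B e^{-ωt} whenever W(x) ≥ c. Then W(x(t)) ≤ (max{c, W(x(0))} + B/ω) e^{A/ω} for all t ≥ 0; in particular W(x(t)) is bounded. -/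
/-- Consider the cascade `x' = f(x,y)`, `y' = g(y)` with interconnection
term `h(x,y) = f(x,y) − f(x, y₀)`. If `W` is a proper differentiable nonnegative Lyapunov
function for the unforced system `x' = f(x, y₀)` (i.e. `L_{f(x,y₀)} W ≤ 0`) and, along a
fixed trajectory `(x(t), y(t))`, there are constants `A, B, ω > 0` and `c ∈ ℝ` with
`L_{h(x, y(t))} W(x) ≤ A e^{-ωt} W(x) + B e^{-ωt}` whenever `W(x) ≥ c`, then
`W(x(t)) ≤ (max{c, W(x(0))} + B/ω) e^{A/ω}` for all `t ≥ 0`; in particular `W(x(t))` is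
bounded. -/
theorem cascade_energy_bound
    {X Y : Type*} [NormedAddCommGroup X] [NormedSpace ℝ X]
    (f : X → Y → X) (y₀ : Y)
    (W : X → ℝ) (hW : Differentiable ℝ W) (hWnonneg : ∀ z : X, 0 ≤ W z)
    (hproper : ∀ r : ℝ, IsCompact {z : X | W z ≤ r})
    (hLyap : ∀ z : X, fderiv ℝ W z (f z y₀) ≤ 0)
    (x : ℝ → X) (y : ℝ → Y)
    (hx : ∀ t : ℝ, 0 ≤ t → HasDerivAt x (f (x t) (y t)) t)
    (A B ω c : ℝ) (hA : 0 < A) (hB : 0 < B) (hω : 0 < ω)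
    (hgrow : ∀ t : ℝ, 0 ≤ t → ∀ z : X, c ≤ W z →
      fderiv ℝ W z (f z (y t) - f z y₀)
        ≤ A * Real.exp (-ω * t) * W z + B * Real.exp (-ω * t)) :
    ∀ t : ℝ, 0 ≤ t → W (x t) ≤ (max c (W (x 0)) + B / ω) * Real.exp (A / ω) := by
  intro T hT
  set M : ℝ := max c (W (x 0)) with hM
  have hM0 : 0 ≤ M := le_trans (hWnonneg (x 0)) (le_max_right _ _)
  have hcM : c ≤ M := le_max_left _ _
  set K : ℝ := Real.exp (A / ω) with hK
  have hKpos : 0 < K := Real.exp_pos _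
  have hK1 : 1 ≤ K := Real.one_le_exp (by positivity)
  set G : ℝ → ℝ := fun s => W (x s) * Real.exp (A / ω * Real.exp (-ω * s))
      + (B / ω * K) * Real.exp (-ω * s) with hG
  -- find t0 ∈ [0,T] with W (x t0) ≤ M and c < W (x s) on (t0, T)
  obtain ⟨t0, ht00, ht0T, ht0M, ht0gt⟩ :
      ∃ t0, 0 ≤ t0 ∧ t0 ≤ T ∧ W (x t0) ≤ M ∧ ∀ s ∈ Set.Ioo t0 T, c < W (x s) := by
    by_cases hS : (Set.Icc (0:ℝ) T ∩ (fun s => W (x s)) ⁻¹' Set.Iic c).Nonempty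
    · set S := Set.Icc (0:ℝ) T ∩ (fun s => W (x s)) ⁻¹' Set.Iic c with hSdef
      have hxc : ContinuousOn x (Set.Icc 0 T) := fun t ht =>
        ((hx t ht.1).continuousAt).continuousWithinAt
      have hwc : ContinuousOn (fun s => W (x s)) (Set.Icc 0 T) :=
        hW.continuous.comp_continuousOn hxc
      have hSclosed : IsClosed S :=
        hwc.preimage_isClosed_of_isClosed isClosed_Icc isClosed_Iic
      have hSbdd : BddAbove S := (bddAbove_Icc).mono Set.inter_subset_left
      have hmem : sSup S ∈ S := hSclosed.csSup_mem hS hSbdd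
      refine ⟨sSup S, hmem.1.1, hmem.1.2, le_trans hmem.2 hcM, ?_⟩
      intro s hs
      by_contra hle
      push_neg at hle
      have hsS : s ∈ S := ⟨⟨le_trans hmem.1.1 hs.1.le, hs.2.le⟩, hle⟩
      exact absurd (le_csSup hSbdd hsS) (not_le.mpr hs.1)
    · refine ⟨0, le_refl _, hT, le_max_right _ _, ?_⟩
      intro s hs
      by_contra hle
      push_neg at hle
      exact hS ⟨s, ⟨hs.1.le, hs.2.le⟩, hle⟩
  -- derivative of G on (t0, T)
  have hderiv : ∀ t ∈ Set.Ioo t0 T, HasDerivAt G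
      (fderiv ℝ W (x t) (f (x t) (y t)) * Real.exp (A / ω * Real.exp (-ω * t))
        + W (x t) * (Real.exp (A / ω * Real.exp (-ω * t)) * (A / ω * (Real.exp (-ω * t) * -ω)))
        + (B / ω * K) * (Real.exp (-ω * t) * -ω)) t := by
    intro t ht
    have ht0 : (0:ℝ) ≤ t := le_trans ht00 ht.1.le
    have h1 : HasDerivAt (fun s : ℝ => -ω * s) (-ω) t := by
      simpa using (hasDerivAt_id t).const_mul (-ω)
    have h2 := h1.exp
    have hw : HasDerivAt (fun s => W (x s)) (fderiv ℝ W (x t) (f (x t) (y t))) t :=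
      ((hW (x t)).hasFDerivAt).comp_hasDerivAt t (hx t ht0)
    have h3 := ((h2.const_mul (A / ω)).exp)
    rw [hG]
    exact (hw.mul h3).add (h2.const_mul (B / ω * K))
  have hωne : ω ≠ 0 := ne_of_gt hω
  have hderiv_nonpos : ∀ t ∈ Set.Ioo t0 T, deriv G t ≤ 0 := by
    intro t ht
    have ht0 : (0:ℝ) ≤ t := le_trans ht00 ht.1.le
    rw [(hderiv t ht).deriv]
    have hE0 : 0 < Real.exp (-ω * t) := Real.exp_pos _
    have hE1 : Real.exp (-ω * t) ≤ 1 := by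
      rw [← Real.exp_zero]
      exact Real.exp_le_exp.mpr (by nlinarith)
    have hPpos : 0 < Real.exp (A / ω * Real.exp (-ω * t)) := Real.exp_pos _
    have hPK : Real.exp (A / ω * Real.exp (-ω * t)) ≤ K :=
      Real.exp_le_exp.mpr (mul_le_of_le_one_right (by positivity) hE1)
    have hsplit := (fderiv ℝ W (x t)).map_sub (f (x t) (y t)) (f (x t) y₀)
    have hg := hgrow t ht0 (x t) (ht0gt t ht).le
    have hl := hLyap (x t)
    have hw' : fderiv ℝ W (x t) (f (x t) (y t))
        ≤ A * Real.exp (-ω * t) * W (x t) + B * Real.exp (-ω * t) := by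
      have heq : fderiv ℝ W (x t) (f (x t) (y t))
          = fderiv ℝ W (x t) (f (x t) y₀)
            + fderiv ℝ W (x t) (f (x t) (y t) - f (x t) y₀) := by
        rw [hsplit]; ring
      rw [heq]; linarith
    have e1 : A / ω * (Real.exp (-ω * t) * -ω) = -(A * Real.exp (-ω * t)) := by
      field_simp
    have e2 : B / ω * K * (Real.exp (-ω * t) * -ω) = -(B * K * Real.exp (-ω * t)) := by
      field_simp
    rw [e1, e2]
    have h5 : fderiv ℝ W (x t) (f (x t) (y t)) * Real.exp (A / ω * Real.exp (-ω * t))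
        ≤ (A * Real.exp (-ω * t) * W (x t) + B * Real.exp (-ω * t))
            * Real.exp (A / ω * Real.exp (-ω * t)) :=
      mul_le_mul_of_nonneg_right hw' hPpos.le
    have h6 : B * Real.exp (-ω * t) * Real.exp (A / ω * Real.exp (-ω * t))
        ≤ B * Real.exp (-ω * t) * K :=
      mul_le_mul_of_nonneg_left hPK (by positivity)
    nlinarith [h5, h6, hE0.le, hPpos.le]
  -- G is antitone on [t0, T]
  have hcont : ContinuousOn G (Set.Icc t0 T) := by
    have hxc : ContinuousOn x (Set.Icc t0 T) := fun t ht =>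
      ((hx t (le_trans ht00 ht.1)).continuousAt).continuousWithinAt
    have hwcon : ContinuousOn (fun s => W (x s)) (Set.Icc t0 T) :=
      hW.continuous.comp_continuousOn hxc
    rw [hG]
    exact (hwcon.mul (by fun_prop)).add (by fun_prop)
  have hanti : AntitoneOn G (Set.Icc t0 T) := by
    apply antitoneOn_of_deriv_nonpos (convex_Icc t0 T) hcont
    · intro t ht
      rw [interior_Icc] at ht
      exact ((hderiv t ht).differentiableAt).differentiableWithinAt
    · intro t ht
      rw [interior_Icc] at ht
      exact hderiv_nonpos t ht
  have hGT : G T ≤ G t0 :=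
    hanti (Set.left_mem_Icc.mpr ht0T) (Set.right_mem_Icc.mpr ht0T) ht0T
  -- conclude
  have hΦT : 1 ≤ Real.exp (A / ω * Real.exp (-ω * T)) := Real.one_le_exp (by positivity)
  have hEt0 : Real.exp (-ω * t0) ≤ 1 := by
    rw [← Real.exp_zero]
    exact Real.exp_le_exp.mpr (by nlinarith)
  have hΦt0 : Real.exp (A / ω * Real.exp (-ω * t0)) ≤ K :=
    Real.exp_le_exp.mpr (mul_le_of_le_one_right (by positivity) hEt0)
  have hwT : 0 ≤ W (x T) := hWnonneg _
  have hwt0 : 0 ≤ W (x t0) := hWnonneg _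
  have h1 : W (x T) ≤ G T := by
    simp only [hG]
    have h7 : 0 ≤ (B / ω * K) * Real.exp (-ω * T) := by positivity
    nlinarith [hΦT, hwT, h7]
  have h2 : G t0 ≤ (M + B / ω) * K := by
    simp only [hG]
    have hBω : 0 < B / ω := by positivity
    have p1 : W (x t0) * Real.exp (A / ω * Real.exp (-ω * t0)) ≤ M * K :=
      mul_le_mul ht0M hΦt0 (Real.exp_pos _).le hM0
    have p2 : B / ω * K * Real.exp (-ω * t0) ≤ B / ω * K * 1 :=
      mul_le_mul_of_nonneg_left hEt0 (by positivity)
    have p3 : M * K + B / ω * K * 1 = (M + B / ω) * K := by ring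
    linarith [p1, p2]
  exact h1.trans (hGT.trans h2)
end
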